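/- For any $\lambda_S, \lambda_W > 0$ with $\lambda_S \ne \lambda_W$, any $\sigma_W > 0$, $c_W \ge 0$, and any $\tau > 0$, the quantity $\Sigma_{WS}(\tau) = -\frac{\lambda_S c_W}{\lambda_S - \lambda_W}\left[\frac{\sigma_W^2}{2\lambda_W}(1-e^{-2\lambda_W\tau}) - \frac{\sigma_W^2}{\lambda_S+\lambda_W}(1-e^{-(\lambda_S+\lambda_W)\tau})\right]$ satisfies $\Sigma_{WS}(\tau) \le 0$, with equality if and only if $c_W = 0$. -/

import Mathlib

open Real

lemma exp_int (a tau : ℝ) (ha : 0 < a) :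
    ∫ t in (0:ℝ)..tau, exp (-a * t) = (1 - exp (-(a * tau))) / a := by
  have h := intervalIntegral.integral_comp_mul_left (fun x => exp x) (neg_ne_zero.mpr ha.ne')
    (a := (0:ℝ)) (b := tau)
  simp only [integral_exp, mul_zero, Real.exp_zero, smul_eq_mul] at h
  rw [h, neg_mul]
  rw [inv_neg]
  field_simp [ha.ne']
  ring

lemma key {a b tau : ℝ} (ha : 0 < a) (hab : a < b) (htau : 0 < tau) :
    (1 - exp (-(b * tau))) / b < (1 - exp (-(a * tau))) / a := by
  have hb : 0 < b := ha.trans hab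
  rw [← exp_int a tau ha, ← exp_int b tau hb]
  apply intervalIntegral.integral_lt_integral_of_continuousOn_of_le_of_exists_lt htau
  · exact (Real.continuous_exp.comp (continuous_const.mul continuous_id)).continuousOn
  · exact (Real.continuous_exp.comp (continuous_const.mul continuous_id)).continuousOn
  · intro x hx
    exact le_of_lt (exp_lt_exp.mpr (by nlinarith [hx.1]))
  · exact ⟨tau, ⟨htau.le, le_refl _⟩, exp_lt_exp.mpr (by nlinarith)⟩

theorem stmt_3 (lamS lamW sigW cW tau : ℝ)
    (hlamS : 0 < lamS) (hlamW : 0 < lamW) (hne : lamS ≠ lamW)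
    (hsigW : 0 < sigW) (hcW : 0 ≤ cW) (htau : 0 < tau) :
    -(lamS * cW / (lamS - lamW)) *
        (sigW ^ 2 / (2 * lamW) * (1 - exp (-(2 * lamW * tau))) -
          sigW ^ 2 / (lamS + lamW) * (1 - exp (-((lamS + lamW) * tau)))) ≤ 0 ∧
      (-(lamS * cW / (lamS - lamW)) *
          (sigW ^ 2 / (2 * lamW) * (1 - exp (-(2 * lamW * tau))) -
            sigW ^ 2 / (lamS + lamW) * (1 - exp (-((lamS + lamW) * tau)))) = 0 ↔ cW = 0) := by
  set D : ℝ := (1 - exp (-(2 * lamW * tau))) / (2 * lamW) -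
      (1 - exp (-((lamS + lamW) * tau))) / (lamS + lamW) with hD
  have hSW : 0 < lamS + lamW := by linarith
  have hrw : sigW ^ 2 / (2 * lamW) * (1 - exp (-(2 * lamW * tau))) -
      sigW ^ 2 / (lamS + lamW) * (1 - exp (-((lamS + lamW) * tau))) = sigW ^ 2 * D := by
    rw [hD]; ring
  have hsq : 0 < sigW ^ 2 := by positivity
  have hP : 0 < lamS / (lamS - lamW) * (sigW ^ 2 * D) := by
    rcases lt_or_gt_of_ne hne with h | h
    · -- lamS < lamW : lamS+lamW < 2 lamW, D < 0, lamS - lamW < 0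
      have hk := key hSW (by linarith : lamS + lamW < 2 * lamW) htau
      have hDneg : D < 0 := by rw [hD]; linarith
      have : lamS / (lamS - lamW) < 0 := div_neg_of_pos_of_neg hlamS (by linarith)
      exact mul_pos_of_neg_of_neg this (mul_neg_of_pos_of_neg hsq hDneg)
    · have hk := key (by positivity : (0:ℝ) < 2 * lamW) (by linarith : 2 * lamW < lamS + lamW) htau
      have hDpos : 0 < D := by rw [hD]; linarith
      have : 0 < lamS / (lamS - lamW) := div_pos hlamS (by linarith)
      exact mul_pos this (mul_pos hsq hDpos)
  have hE : -(lamS * cW / (lamS - lamW)) *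
      (sigW ^ 2 / (2 * lamW) * (1 - exp (-(2 * lamW * tau))) -
        sigW ^ 2 / (lamS + lamW) * (1 - exp (-((lamS + lamW) * tau)))) =
      -(cW * (lamS / (lamS - lamW) * (sigW ^ 2 * D))) := by
    rw [hrw]; ring
  rw [hE]
  constructor
  · have : 0 ≤ cW * (lamS / (lamS - lamW) * (sigW ^ 2 * D)) := mul_nonneg hcW hP.le
    linarith
  · constructor
    · intro h
      have := mul_eq_zero.mp (neg_eq_zero.mp h)
      rcases this with h1 | h1
      · exact h1
      · exact absurd h1 hP.ne'
    · intro h; rw [h]; ring
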